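/- Let T be a finite tree and let T_1, ..., T_m be subtrees of T such that any two distinct subtrees share at most one vertex of T and each vertex of T lies in at most ℓ of the subtrees. Then the subtrees can be colored with ℓ colors so that subtrees sharing a vertex receive distinct colors. -/

import Mathlib

open SimpleGraph

private lemma isPath_append_of_inter {V : Type*} {G : SimpleGraph V} {u v w : V}
    {p : G.Walk u v} {q : G.Walk v w} (hp : p.IsPath) (hq : q.IsPath)
    (h : ∀ x, x ∈ p.support → x ∈ q.support → x = v) : (p.append q).IsPath := by
  classical
  rw [Walk.isPath_def, Walk.support_append]
  refine List.Nodup.append hp.support_nodup (hq.support_nodup.sublist (List.tail_sublist _)) ?_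
  intro x hxp hxq
  have hxq' : x ∈ q.support := List.mem_of_mem_tail hxq
  have hx : x = v := h x hxp hxq'
  subst hx
  have := hq.support_nodup
  rw [q.support_eq_cons] at this
  exact (List.nodup_cons.mp this).1 hxq

private lemma tree_length_eq_dist {V : Type*} {G : SimpleGraph V} (hT : G.IsTree) {u v : V}
    (p : G.Walk u v) (hp : p.IsPath) : p.length = G.dist u v := by
  classical
  obtain ⟨q, hq⟩ := hT.isConnected.exists_walk_length_eq_dist u v
  have h2 : (⟨p, hp⟩ : G.Path u v) = q.toPath := hT.IsAcyclic.path_unique _ _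
  have h3 : p = (q.toPath : G.Walk u v) := congrArg Subtype.val h2
  have h4 : (q.toPath : G.Walk u v).length ≤ q.length := Walk.length_bypass_le _
  have h5 := SimpleGraph.dist_le p
  have h6 : p.length = (q.toPath : G.Walk u v).length := by rw [h3]
  omega

private lemma tree_dist_add {V : Type*} {G : SimpleGraph V} (hT : G.IsTree) {u v w : V}
    (p : G.Walk u v) (hp : p.IsPath) (hw : w ∈ p.support) :
    G.dist u w + G.dist w v = G.dist u v := by
  classical
  have h1 := tree_length_eq_dist hT _ (hp.takeUntil hw)
  have h2 := tree_length_eq_dist hT _ (hp.dropUntil hw)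
  have h3 := tree_length_eq_dist hT p hp
  have h4 := congrArg Walk.length (p.take_spec hw)
  rw [Walk.length_append] at h4
  omega

private lemma exists_path_in_set {V : Type*} {G : SimpleGraph V} {s : Set V}
    (hc : (G.induce s).Connected) {u t : V} (hu : u ∈ s) (ht : t ∈ s) :
    ∃ p : G.Walk u t, p.IsPath ∧ ∀ x ∈ p.support, x ∈ s := by
  classical
  obtain ⟨w⟩ := hc ⟨u, hu⟩ ⟨t, ht⟩
  let emb : G.induce s ↪g G := SimpleGraph.Embedding.induce s
  refine ⟨((w.toPath : (G.induce s).Walk ⟨u, hu⟩ ⟨t, ht⟩).map emb.toHom : G.Walk u t),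
    Walk.map_isPath_of_injective (f := emb.toHom) Subtype.val_injective (w.toPath).2, ?_⟩
  intro x hx
  have hx : x ∈ (Walk.map emb.toHom (w.toPath : (G.induce s).Walk ⟨u, hu⟩ ⟨t, ht⟩)).support := hx
  rw [Walk.support_map] at hx
  obtain ⟨y, _, rfl⟩ := List.mem_map.mp hx
  exact y.2

open Finset in
private noncomputable def greedyCol (ℓ : ℕ) [NeZero ℓ] {m : ℕ} (f : Fin m → ℕ)
    (adj : Fin m → Fin m → Prop) : Fin m → Fin ℓ := fun i =>
  letI : DecidablePred fun j => adj j i ∧ f j < f i := Classical.decPred _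
  let N : Finset (Fin m) := Finset.univ.filter (fun j => adj j i ∧ f j < f i)
  let used : Finset (Fin ℓ) := N.attach.image (fun j => greedyCol ℓ f adj j.1)
  if h : (Finset.univ \ used).Nonempty then h.choose
  else ⟨0, Nat.pos_of_ne_zero (NeZero.ne ℓ)⟩
termination_by i => f i
decreasing_by
  have := j.2
  simp only [N, Finset.mem_filter] at this
  exact this.2.2

private lemma greedyCol_spec (ℓ : ℕ) [NeZero ℓ] {m : ℕ} (f : Fin m → ℕ)
    (adj : Fin m → Fin m → Prop) (i : Fin m)
    (hcard : {j | adj j i ∧ f j < f i}.ncard < ℓ) :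
    ∀ j, adj j i → f j < f i → greedyCol ℓ f adj i ≠ greedyCol ℓ f adj j := by
  classical
  intro j hadj hfj
  conv_lhs => rw [greedyCol]
  letI : DecidablePred fun j => adj j i ∧ f j < f i := Classical.decPred _
  set N : Finset (Fin m) := Finset.univ.filter (fun j => adj j i ∧ f j < f i) with hN
  set used : Finset (Fin ℓ) := N.attach.image (fun j => greedyCol ℓ f adj j.1) with hused
  have hNcard : N.card < ℓ := by
    have : (↑N : Set (Fin m)) = {j | adj j i ∧ f j < f i} := by
      ext x; simp [hN]
    rw [← Set.ncard_coe_finset, this]; exact hcard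
  have husedcard : used.card < ℓ := lt_of_le_of_lt
    ((Finset.card_image_le).trans (by rw [Finset.card_attach])) hNcard
  have h : (Finset.univ \ used).Nonempty := by
    rw [← Finset.card_pos, Finset.card_sdiff_of_subset (Finset.subset_univ _), Finset.card_univ,
      Fintype.card_fin]
    omega
  rw [dif_pos h]
  have hmem := h.choose_spec
  rw [Finset.mem_sdiff] at hmem
  intro heq
  apply hmem.2
  rw [heq, hused]
  have hjN : j ∈ N := by simp [hN, hadj, hfj]
  exact Finset.mem_image.mpr ⟨⟨j, hjN⟩, Finset.mem_attach _ _, rfl⟩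

/-- If `S 1, …, S m` are subtrees of a finite tree `T` (nonempty vertex sets inducing
connected subgraphs) such that any two distinct subtrees share at most one vertex and
every vertex lies in at most `ℓ` subtrees, then the subtrees can be colored with `ℓ`
colors so that subtrees sharing a vertex receive distinct colors. -/
theorem subtrees_proper_coloring {V : Type*} [Fintype V]
    (T : SimpleGraph V) (hT : T.IsTree) (m ℓ : ℕ) (S : Fin m → Set V)
    (hne : ∀ i, (S i).Nonempty)
    (hconn : ∀ i, (T.induce (S i)).Connected)
    (hshare : ∀ i j, i ≠ j → (S i ∩ S j).Subsingleton)
    (hℓ : ∀ v : V, {i | v ∈ S i}.ncard ≤ ℓ) :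
    ∃ col : Fin m → Fin ℓ,
      ∀ i j, i ≠ j → (S i ∩ S j).Nonempty → col i ≠ col j := by
  classical
  rcases Nat.eq_zero_or_pos m with hm | hm
  · subst hm; exact ⟨fun i => i.elim0, fun i => i.elim0⟩
  obtain ⟨v0, hv0⟩ := hne ⟨0, hm⟩
  have hℓpos : 0 < ℓ := by
    have h1 : 0 < {i | v0 ∈ S i}.ncard :=
      (Set.ncard_pos (Set.toFinite _)).mpr ⟨⟨0, hm⟩, hv0⟩
    exact lt_of_lt_of_le h1 (hℓ v0)
  haveI : NeZero ℓ := ⟨hℓpos.ne'⟩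
  -- choose the "top" vertex of each subtree: closest to the root v0
  have hmin : ∀ i, ∃ t ∈ S i, ∀ b ∈ S i, T.dist v0 t ≤ T.dist v0 b :=
    fun i => Set.exists_min_image (S i) (fun v => T.dist v0 v) (Set.toFinite _) (hne i)
  choose t ht htmin using hmin
  -- key lemma: deeper subtrees' tops belong to intersecting shallower-or-equal subtrees
  have key : ∀ i j u, u ∈ S i → u ∈ S j →
      T.dist v0 (t j) ≤ T.dist v0 (t i) → t i ∈ S j := by
    intro i j u hui huj hle
    obtain ⟨p, hp, hpS⟩ := exists_path_in_set (hconn i) hui (ht i)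
    obtain ⟨q, hq, hqS⟩ := exists_path_in_set (hconn j) huj (ht j)
    obtain ⟨pr0⟩ := hT.isConnected (t i) v0
    obtain ⟨qr0⟩ := hT.isConnected (t j) v0
    set pr : T.Walk (t i) v0 := pr0.toPath.val with hpr
    set qr : T.Walk (t j) v0 := qr0.toPath.val with hqr
    have hprP : pr.IsPath := pr0.toPath.2
    have hqrP : qr.IsPath := qr0.toPath.2
    -- the concatenations are paths
    have hc1 : (p.append pr).IsPath := by
      refine isPath_append_of_inter hp hprP ?_
      intro x hxp hxpr
      have hxS : x ∈ S i := hpS x hxp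
      have hsplit := tree_dist_add hT pr hprP hxpr
      have hmin' := htmin i x hxS
      have e1 : T.dist v0 (t i) = T.dist (t i) v0 := SimpleGraph.dist_comm
      have e2 : T.dist v0 x = T.dist x v0 := SimpleGraph.dist_comm
      have h0 : T.dist (t i) x = 0 := by omega
      exact (hT.isConnected.dist_eq_zero_iff.mp h0).symm
    have hc2 : (q.append qr).IsPath := by
      refine isPath_append_of_inter hq hqrP ?_
      intro x hxq hxqr
      have hxS : x ∈ S j := hqS x hxq
      have hsplit := tree_dist_add hT qr hqrP hxqr
      have hmin' := htmin j x hxS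
      have e1 : T.dist v0 (t j) = T.dist (t j) v0 := SimpleGraph.dist_comm
      have e2 : T.dist v0 x = T.dist x v0 := SimpleGraph.dist_comm
      have h0 : T.dist (t j) x = 0 := by omega
      exact (hT.isConnected.dist_eq_zero_iff.mp h0).symm
    have heq : p.append pr = q.append qr := by
      have := hT.IsAcyclic.path_unique ⟨p.append pr, hc1⟩ ⟨q.append qr, hc2⟩
      exact congrArg Subtype.val this
    have hti : t i ∈ (q.append qr).support := by
      rw [← heq, Walk.mem_support_append_iff]
      exact Or.inl (Walk.end_mem_support p)
    rw [Walk.mem_support_append_iff] at hti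
    rcases hti with hti | hti
    · exact hqS _ hti
    · -- t i lies on the path from t j to the root, so t i = t j
      have hsplit := tree_dist_add hT qr hqrP hti
      have e1 : T.dist v0 (t j) = T.dist (t j) v0 := SimpleGraph.dist_comm
      have e2 : T.dist v0 (t i) = T.dist (t i) v0 := SimpleGraph.dist_comm
      have h0 : T.dist (t j) (t i) = 0 := by omega
      have : t j = t i := hT.isConnected.dist_eq_zero_iff.mp h0
      rw [← this]; exact ht j
  -- set up greedy coloring data
  set f : Fin m → ℕ := fun i => T.dist v0 (t i) * m + i.val with hf
  have hmono : ∀ i j : Fin m, f j < f i → T.dist v0 (t j) ≤ T.dist v0 (t i) := by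
    intro i j h
    by_contra hc
    push_neg at hc
    have h2 : (T.dist v0 (t i) + 1) * m ≤ T.dist v0 (t j) * m :=
      Nat.mul_le_mul_right m hc
    rw [add_mul, one_mul] at h2
    have := i.isLt
    simp only [hf] at h
    omega
  have hfinj : ∀ i j : Fin m, i ≠ j → f i ≠ f j := by
    intro i j hij heq
    apply hij
    have h1 : f i % m = i.val := by
      simp only [hf]
      rw [Nat.add_comm, Nat.add_mul_mod_self_right, Nat.mod_eq_of_lt i.isLt]
    have h2 : f j % m = j.val := by
      simp only [hf]
      rw [Nat.add_comm, Nat.add_mul_mod_self_right, Nat.mod_eq_of_lt j.isLt]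
    exact Fin.ext (by rw [← h1, ← h2, heq])
  set adj : Fin m → Fin m → Prop := fun j i => j ≠ i ∧ (S j ∩ S i).Nonempty with hadj
  have hcard : ∀ i, {j | adj j i ∧ f j < f i}.ncard < ℓ := by
    intro i
    have hsub : insert i {j | adj j i ∧ f j < f i} ⊆ {k | t i ∈ S k} := by
      intro j hj
      rcases Set.mem_insert_iff.mp hj with rfl | hj
      · exact ht j
      · obtain ⟨⟨hne', ⟨u, huj, hui⟩⟩, hfj⟩ := hj
        exact key i j u hui huj (hmono i j hfj)
    have hicard : (insert i {j | adj j i ∧ f j < f i}).ncard ≤ ℓ :=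
      le_trans (Set.ncard_le_ncard hsub (Set.toFinite _)) (hℓ (t i))
    have hnotmem : i ∉ {j | adj j i ∧ f j < f i} := fun h => h.1.1 rfl
    rw [Set.ncard_insert_of_notMem hnotmem (Set.toFinite _)] at hicard
    omega
  refine ⟨greedyCol ℓ f adj, ?_⟩
  intro i j hij hint
  rcases Nat.lt_or_ge (f j) (f i) with hlt | hge
  · exact greedyCol_spec ℓ f adj i (hcard i) j
      ⟨Ne.symm hij, by rwa [Set.inter_comm]⟩ hlt
  · have hlt : f i < f j := lt_of_le_of_ne hge (hfinj i j hij)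
    exact (greedyCol_spec ℓ f adj j (hcard j) i ⟨hij, hint⟩ hlt).symm
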